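/- Let X̄ ∈ ℝ^{n×k} have columns that are nonnegative unit vectors, and let h : ℝ^{n×k} → ℝ be continuously differentiable. If X̄ is a local minimizer of h over OB^{n,k}_+ = {X : ‖x_j‖ = 1, x_j ≥ 0 for all j}, then the Riemannian gradient grad h(X̄) := ∇h(X̄) − X̄ Diag(X̄^T ∇h(X̄)) satisfies the complementarity conditions 0 ≤ X̄ ⊥ grad h(X̄) ≥ 0, i.e., grad h(X̄) ≥ 0 entrywise, and X̄_{ij} · [grad h(X̄)]_{ij} = 0 for all (i,j). -/

import Mathlib

open Matrix Finset

open Filter Set Topology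

attribute [local instance] Matrix.frobeniusNormedAddCommGroup Matrix.frobeniusNormedSpace

lemma deriv_nonneg_of_local_min {f : ℝ → ℝ} {a : ℝ}
    (hf : HasDerivAt f a 0) (hmin : ∀ᶠ t in 𝓝[>] (0:ℝ), f 0 ≤ f t) : 0 ≤ a := by
  have h1 : HasDerivWithinAt f a (Set.Ioi 0) 0 := hf.hasDerivWithinAt
  have h2 := hasDerivWithinAt_iff_tendsto_slope.mp h1
  have hs : Set.Ioi (0:ℝ) \ {0} = Set.Ioi 0 := by
    ext x; simp (config := {contextual := true}) [le_of_lt]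
  rw [hs] at h2
  refine ge_of_tendsto h2 ?_
  filter_upwards [hmin, self_mem_nhdsWithin] with t ht ht'
  have h0 : (0:ℝ) < t := ht'
  have : slope f 0 t = (f t - f 0) / t := by simp [slope_def_field]
  rw [this]
  have : (0:ℝ) ≤ f t - f 0 := by linarith
  positivity


lemma hasDerivAt_matrix {n k : ℕ} {c : ℝ → Matrix (Fin n) (Fin k) ℝ}
    {D : Matrix (Fin n) (Fin k) ℝ} {t : ℝ}
    (hc : ∀ i j, HasDerivAt (fun s => c s i j) (D i j) t) : HasDerivAt c D t := by
  let e : Matrix (Fin n) (Fin k) ℝ ≃ₗ[ℝ] (Fin n → Fin k → ℝ) :=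
    { toFun := fun M => M, invFun := fun M => M, map_add' := fun _ _ => rfl,
      map_smul' := fun _ _ => rfl, left_inv := fun _ => rfl, right_inv := fun _ => rfl }
  let E := e.toContinuousLinearEquiv
  have h1 : HasDerivAt (fun s => E (c s)) (E D) t := by
    rw [hasDerivAt_pi]
    intro i
    rw [hasDerivAt_pi]
    intro j
    exact hc i j
  have h2 := (E.symm.hasFDerivAt.comp_hasDerivAt t h1)
  exact h2

lemma aux_dir (n k : ℕ) (h : Matrix (Fin n) (Fin k) ℝ → ℝ) (hdiff : ContDiff ℝ 1 h)
    (Xb : Matrix (Fin n) (Fin k) ℝ)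
    (hcol : ∀ j, ∑ i, (Xb i j) ^ 2 = 1) (hnn : ∀ i j, 0 ≤ Xb i j)
    (hmin : ∃ ε : ℝ, 0 < ε ∧ ∀ X : Matrix (Fin n) (Fin k) ℝ,
      (∀ j, ∑ i, (X i j) ^ 2 = 1) → (∀ i j, 0 ≤ X i j) → ‖X - Xb‖ < ε → h Xb ≤ h X)
    (j : Fin k) (d : Fin n → ℝ)
    (hd : ∀ᶠ t in 𝓝[>] (0:ℝ), ∀ l, 0 ≤ Xb l j + t * d l) :
    0 ≤ fderiv ℝ h Xb
      (Matrix.of fun a b => if b = j then d a - Xb a j * (∑ l, Xb l j * d l) else 0) := by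
  obtain ⟨ε, hε, hloc⟩ := hmin
  set s : ℝ := ∑ l, Xb l j * d l with hs
  set v : ℝ → Fin n → ℝ := fun t l => Xb l j + t * d l with hv
  set q : ℝ → ℝ := fun t => ∑ l, (v t l) ^ 2 with hq
  set r : ℝ → ℝ := fun t => Real.sqrt (q t) with hr
  have hq0 : q 0 = 1 := by simpa [hq, hv] using hcol j
  have hr0 : r 0 = 1 := by simp [hr, hq0]
  have hvd : ∀ l, HasDerivAt (fun t => v t l) (d l) 0 := fun l =>
    (hasDerivAt_mul_const (d l)).const_add (Xb l j)
  have hqd : HasDerivAt q (2 * s) 0 := by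
    have h1 : HasDerivAt q (∑ l, (2 : ℕ) * (v 0 l) ^ 1 * d l) 0 :=
      HasDerivAt.fun_sum fun l _ => (hvd l).pow 2
    convert h1 using 1
    rw [hs, Finset.mul_sum]
    refine Finset.sum_congr rfl fun l _ => ?_
    simp [hv]
    ring
  have hrd : HasDerivAt r s 0 := by
    have h1 := (Real.hasDerivAt_sqrt (by rw [hq0]; norm_num)).comp 0 hqd
    refine HasDerivAt.congr_deriv h1 ?_
    rw [hq0, Real.sqrt_one]
    ring
  set c : ℝ → Matrix (Fin n) (Fin k) ℝ :=
    fun t => Matrix.of fun a b => if b = j then v t a / r t else Xb a b with hc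
  have hc0 : c 0 = Xb := by
    ext a b
    simp only [hc, Matrix.of_apply]
    split
    · next hb => rw [hb, hr0]; simp [hv]
    · rfl
  set D : Matrix (Fin n) (Fin k) ℝ :=
    Matrix.of fun a b => if b = j then d a - Xb a j * s else 0 with hD
  have hcd : HasDerivAt c D 0 := by
    apply hasDerivAt_matrix
    intro a b
    by_cases hb : b = j
    · have hdiv := (hvd a).div hrd (by rw [hr0]; norm_num)
      have h2 : HasDerivAt (fun t => v t a / r t) (d a - Xb a j * s) 0 := by
        refine HasDerivAt.congr_deriv hdiv ?_
        rw [hr0]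
        simp [hv]
      simpa [hc, hD, hb] using h2
    · simpa [hc, hD, hb] using hasDerivAt_const (0:ℝ) (Xb a b)
  have hfd : HasFDerivAt h (fderiv ℝ h Xb) Xb :=
    (hdiff.differentiable one_ne_zero).differentiableAt.hasFDerivAt
  have h1 : HasFDerivAt h (fderiv ℝ h Xb) (c 0) := by rw [hc0]; exact hfd
  have hcomp : HasDerivAt (fun t => h (c t)) (fderiv ℝ h Xb D) 0 :=
    h1.comp_hasDerivAt 0 hcd
  refine deriv_nonneg_of_local_min hcomp ?_
  have hqc : Continuous q := by
    apply continuous_finset_sum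
    intro l _
    fun_prop
  have hqpos : ∀ᶠ t in 𝓝 (0:ℝ), 0 < q t := by
    have h2 : Filter.Tendsto q (𝓝 0) (𝓝 1) := by
      have := hqc.continuousAt (x := (0:ℝ))
      rwa [ContinuousAt, hq0] at this
    exact h2.eventually (eventually_gt_nhds one_pos)
  have hnorm : ∀ᶠ t in 𝓝 (0:ℝ), ‖c t - Xb‖ < ε := by
    have hcc : Filter.Tendsto c (𝓝 0) (𝓝 Xb) := hc0 ▸ hcd.continuousAt
    have h3 : Filter.Tendsto (fun t => ‖c t - Xb‖) (𝓝 0) (𝓝 0) := by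
      have := (hcc.sub (tendsto_const_nhds (x := Xb))).norm
      simpa using this
    exact h3.eventually (eventually_lt_nhds hε)
  filter_upwards [hd, hqpos.filter_mono nhdsWithin_le_nhds,
    hnorm.filter_mono nhdsWithin_le_nhds] with t htd htq htn
  rw [hc0]
  apply hloc
  · intro j'
    by_cases hj : j' = j
    · subst hj
      simp only [hc, Matrix.of_apply, eq_self_iff_true, if_true]
      rw [show ∀ f : Fin n → ℝ, ∑ i, (f i / r t) ^ 2 = (∑ i, f i ^ 2) / r t ^ 2 from
        fun f => by simp [div_pow, Finset.sum_div]]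
      rw [hr, Real.sq_sqrt htq.le]
      exact div_self htq.ne'
    · simp only [hc, Matrix.of_apply, if_neg hj]
      exact hcol j'
  · intro a b
    by_cases hb : b = j
    · subst hb
      simp only [hc, Matrix.of_apply, eq_self_iff_true, if_true]
      exact div_nonneg (htd a) (Real.sqrt_nonneg _)
    · simp only [hc, Matrix.of_apply, if_neg hb]
      exact hnn a b
  · exact htn

lemma fderiv_expand {n k : ℕ} (L : Matrix (Fin n) (Fin k) ℝ →L[ℝ] ℝ)
    (M : Matrix (Fin n) (Fin k) ℝ) :
    L M = ∑ a, ∑ b, M a b * L (Matrix.single a b 1) := by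
  conv_lhs => rw [Matrix.matrix_eq_sum_single M]
  rw [map_sum]
  refine Finset.sum_congr rfl fun a _ => ?_
  rw [map_sum]
  refine Finset.sum_congr rfl fun b _ => ?_
  rw [show Matrix.single a b (M a b) = M a b • Matrix.single a b 1 by
    rw [Matrix.smul_single]; simp]
  rw [L.map_smul]
  simp

/-- First-order optimality for minimization over the nonnegative oblique manifold:
at a local minimizer `X̄`, the Riemannian gradient
`grad h(X̄) = ∇h(X̄) − X̄ Diag(X̄ᵀ ∇h(X̄))` satisfies `0 ≤ X̄ ⊥ grad h(X̄) ≥ 0`. -/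
theorem stmt_18 (n k : ℕ) (h : Matrix (Fin n) (Fin k) ℝ → ℝ) (hdiff : ContDiff ℝ 1 h)
    (Xb : Matrix (Fin n) (Fin k) ℝ)
    (hcol : ∀ j, ∑ i, (Xb i j) ^ 2 = 1) (hnn : ∀ i j, 0 ≤ Xb i j)
    (hmin : ∃ ε : ℝ, 0 < ε ∧ ∀ X : Matrix (Fin n) (Fin k) ℝ,
      (∀ j, ∑ i, (X i j) ^ 2 = 1) → (∀ i j, 0 ≤ X i j) → ‖X - Xb‖ < ε → h Xb ≤ h X) :
    let G : Matrix (Fin n) (Fin k) ℝ :=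
      fun i j => fderiv ℝ h Xb (Matrix.single i j 1)
    let grad : Matrix (Fin n) (Fin k) ℝ :=
      G - Xb * Matrix.diagonal (fun j => (Xbᵀ * G) j j)
    ∀ i j, 0 ≤ grad i j ∧ Xb i j * grad i j = 0 := by
  intro G grad i j
  set e : Fin n → ℝ := Pi.single i 1 with he
  have hGdef : ∀ a b, G a b = fderiv ℝ h Xb (Matrix.single a b 1) := fun _ _ => rfl
  have heval : ∀ d : Fin n → ℝ,
      fderiv ℝ h Xb (Matrix.of fun a b => if b = j then d a - Xb a j * (∑ l, Xb l j * d l) else 0)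
        = ∑ a, (d a - Xb a j * (∑ l, Xb l j * d l)) * G a j := by
    intro d
    rw [fderiv_expand]
    simp only [Matrix.of_apply, ite_mul, zero_mul]
    refine Finset.sum_congr rfl fun a _ => ?_
    rw [Finset.sum_ite_eq' Finset.univ j]
    simp [hGdef]
  have hgrad : grad i j = G i j - Xb i j * ∑ l, Xb l j * G l j := by
    simp only [grad, Matrix.sub_apply, Matrix.mul_diagonal]
    simp [Matrix.mul_apply]
  have hsingle : (∑ l, Xb l j * e l) = Xb i j := by
    simp [he, Pi.single_apply, mul_ite, Finset.sum_ite_eq']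
  have hsum : ∑ a, (e a - Xb a j * Xb i j) * G a j = grad i j := by
    rw [hgrad]
    rw [Finset.sum_congr rfl (fun a _ => sub_mul (e a) (Xb a j * Xb i j) (G a j)),
      Finset.sum_sub_distrib]
    congr 1
    · simp [he, Pi.single_apply, ite_mul, Finset.sum_ite_eq']
    · rw [Finset.mul_sum]
      refine Finset.sum_congr rfl fun a _ => ?_
      ring
  have key1 : 0 ≤ grad i j := by
    have hd : ∀ᶠ t in 𝓝[>] (0:ℝ), ∀ l, 0 ≤ Xb l j + t * e l := by
      filter_upwards [self_mem_nhdsWithin] with t ht l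
      have h1 : (0:ℝ) < t := ht
      have h2 : (0:ℝ) ≤ e l := by
        by_cases hl : l = i <;> simp [he, hl, Pi.single_apply]
      have := hnn l j
      positivity
    have hx := aux_dir n k h hdiff Xb hcol hnn hmin j e hd
    rw [heval, hsingle, hsum] at hx
    exact hx
  refine ⟨key1, ?_⟩
  rcases eq_or_lt_of_le (hnn i j) with hz | hp
  · rw [← hz, zero_mul]
  have hd : ∀ᶠ t in 𝓝[>] (0:ℝ), ∀ l, 0 ≤ Xb l j + t * (-e) l := by
    have hev : ∀ᶠ t in 𝓝 (0:ℝ), t < Xb i j := eventually_lt_nhds hp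
    filter_upwards [hev.filter_mono nhdsWithin_le_nhds, self_mem_nhdsWithin] with t ht htp l
    have htp' : (0:ℝ) < t := htp
    by_cases hl : l = i
    · subst hl; simp [he]; linarith
    · simp [he, Pi.single_apply, hl]
      exact hnn l j
  have hx := aux_dir n k h hdiff Xb hcol hnn hmin j (-e) hd
  rw [heval] at hx
  have hsingle' : (∑ l, Xb l j * (-e) l) = -Xb i j := by
    simp only [Pi.neg_apply, mul_neg, Finset.sum_neg_distrib]
    rw [hsingle]
  rw [hsingle'] at hx
  have hsum' : ∑ a, ((-e) a - Xb a j * -Xb i j) * G a j = -(grad i j) := by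
    rw [← hsum, ← Finset.sum_neg_distrib]
    refine Finset.sum_congr rfl fun a _ => ?_
    simp only [Pi.neg_apply]
    ring
  rw [hsum'] at hx
  have : grad i j = 0 := le_antisymm (by linarith) key1
  rw [this, mul_zero]
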